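/- Let τ > 0, let (u1, v1) be a sub-solution and (u2, v2) a super-solution of system (N) on [0, τ), both with nonnegative components (u_i(t,x) ≥ 0 and v_i(t,x) ≥ 0 for all t ∈ [0,τ), x ∈ D̄, i = 1,2). If u1(0,x) ≤ u2(0,x) and v1(0,x) ≥ v2(0,x) for all x ∈ D̄, then u1(t,x) ≤ u2(t,x) and v1(t,x) ≥ v2(t,x) for all t ∈ (0, τ) and x ∈ D̄. -/

import Mathlib

open MeasureTheory Filter Topology

noncomputable section

/-- A super-solution of the Neumann-type nonlocal dispersal competition system
on `[0, τ)`: the first inequality is `≥`, the second is `≤`. -/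
def IsSuperSolN (N : ℕ) (D : Set (EuclideanSpace ℝ (Fin N)))
    (κ : EuclideanSpace ℝ (Fin N) → ℝ) (ν1 ν2 : ℝ)
    (a1 a2 b1 b2 c1 c2 : ℝ → EuclideanSpace ℝ (Fin N) → ℝ)
    (τ : ℝ) (u v : ℝ → EuclideanSpace ℝ (Fin N) → ℝ) : Prop :=
  ContinuousOn (fun p : ℝ × EuclideanSpace ℝ (Fin N) => u p.1 p.2) (Set.Ico 0 τ ×ˢ closure D) ∧
  ContinuousOn (fun p : ℝ × EuclideanSpace ℝ (Fin N) => v p.1 p.2) (Set.Ico 0 τ ×ˢ closure D) ∧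
  (∀ x ∈ closure D, ∀ t ∈ Set.Ico (0:ℝ) τ,
    DifferentiableWithinAt ℝ (fun s => u s x) (Set.Ico 0 τ) t ∧
    DifferentiableWithinAt ℝ (fun s => v s x) (Set.Ico 0 τ) t) ∧
  (∀ t ∈ Set.Ioo (0:ℝ) τ, ∀ x ∈ closure D,
    ν1 * (∫ y in D, κ (y - x) * (u t y - u t x)) +
        u t x * (a1 t x - b1 t x * u t x - c1 t x * v t x)
      ≤ derivWithin (fun s => u s x) (Set.Ico 0 τ) t ∧
    derivWithin (fun s => v s x) (Set.Ico 0 τ) t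
      ≤ ν2 * (∫ y in D, κ (y - x) * (v t y - v t x)) +
        v t x * (a2 t x - b2 t x * u t x - c2 t x * v t x))

/-- A sub-solution of the Neumann-type nonlocal dispersal competition system
on `[0, τ)`: the first inequality is `≤`, the second is `≥`. -/
def IsSubSolN (N : ℕ) (D : Set (EuclideanSpace ℝ (Fin N)))
    (κ : EuclideanSpace ℝ (Fin N) → ℝ) (ν1 ν2 : ℝ)
    (a1 a2 b1 b2 c1 c2 : ℝ → EuclideanSpace ℝ (Fin N) → ℝ)
    (τ : ℝ) (u v : ℝ → EuclideanSpace ℝ (Fin N) → ℝ) : Prop :=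
  ContinuousOn (fun p : ℝ × EuclideanSpace ℝ (Fin N) => u p.1 p.2) (Set.Ico 0 τ ×ˢ closure D) ∧
  ContinuousOn (fun p : ℝ × EuclideanSpace ℝ (Fin N) => v p.1 p.2) (Set.Ico 0 τ ×ˢ closure D) ∧
  (∀ x ∈ closure D, ∀ t ∈ Set.Ico (0:ℝ) τ,
    DifferentiableWithinAt ℝ (fun s => u s x) (Set.Ico 0 τ) t ∧
    DifferentiableWithinAt ℝ (fun s => v s x) (Set.Ico 0 τ) t) ∧
  (∀ t ∈ Set.Ioo (0:ℝ) τ, ∀ x ∈ closure D,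
    derivWithin (fun s => u s x) (Set.Ico 0 τ) t
      ≤ ν1 * (∫ y in D, κ (y - x) * (u t y - u t x)) +
        u t x * (a1 t x - b1 t x * u t x - c1 t x * v t x) ∧
    ν2 * (∫ y in D, κ (y - x) * (v t y - v t x)) +
        v t x * (a2 t x - b2 t x * u t x - c2 t x * v t x)
      ≤ derivWithin (fun s => v s x) (Set.Ico 0 τ) t)


lemma deriv_nonpos_of_min_left {f : ℝ → ℝ} {d t : ℝ} (ht : 0 < t)
    (hf : HasDerivAt f d t) (hmin : ∀ s ∈ Set.Icc (0:ℝ) t, f t ≤ f s) : d ≤ 0 := by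
  have h := (hf.hasDerivWithinAt (s := Set.Iio t))
  rw [hasDerivWithinAt_iff_tendsto_slope] at h
  have hset : Set.Iio t \ {t} = Set.Iio t := Set.diff_singleton_eq_self (by simp)
  rw [hset] at h
  have hne : (𝓝[Set.Iio t] t).NeBot := nhdsLT_neBot t
  refine le_of_tendsto h ?_
  have hmem : Set.Ioo 0 t ∈ 𝓝[Set.Iio t] t := by
    have h1 : Set.Ioi (0:ℝ) ∈ 𝓝[Set.Iio t] t :=
      mem_nhdsWithin_of_mem_nhds (isOpen_Ioi.mem_nhds ht)
    have h2 : Set.Iio t ∈ 𝓝[Set.Iio t] t := self_mem_nhdsWithin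
    have h3 : Set.Ioi (0:ℝ) ∩ Set.Iio t ∈ 𝓝[Set.Iio t] t := Filter.inter_mem h1 h2
    rwa [Set.Ioi_inter_Iio] at h3
  filter_upwards [hmem] with s hs
  rw [slope_def_field]
  apply div_nonpos_of_nonneg_of_nonpos
  · have := hmin s ⟨hs.1.le, hs.2.le⟩; linarith
  · linarith [hs.2]

set_option maxHeartbeats 2000000 in
theorem sub_super_solution_comparison_neumann
    (N : ℕ) (hN : 1 ≤ N)
    (D : Set (EuclideanSpace ℝ (Fin N)))
    (hDo : IsOpen D) (hDne : D.Nonempty) (hDbd : Bornology.IsBounded D)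
    (κ : EuclideanSpace ℝ (Fin N) → ℝ) (hκc : Continuous κ)
    (r : ℝ) (hr : 0 < r)
    (hκpos : ∀ z, ‖z‖ < r → 0 < κ z)
    (hκsupp : ∀ z, r ≤ ‖z‖ → κ z = 0)
    (hκsymm : ∀ z, κ (-z) = κ z)
    (hκint : (∫ z, κ z) = 1)
    (T : ℝ) (hT : 0 < T)
    (ν1 ν2 : ℝ) (hν1 : 0 < ν1) (hν2 : 0 < ν2)
    (a1 a2 b1 b2 c1 c2 : ℝ → EuclideanSpace ℝ (Fin N) → ℝ)
    (hc : ∀ f ∈ [a1, a2, b1, b2, c1, c2],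
      ContinuousOn (fun p : ℝ × EuclideanSpace ℝ (Fin N) => f p.1 p.2)
        ((Set.univ : Set ℝ) ×ˢ closure D))
    (hpos : ∀ f ∈ [a1, a2, b1, b2, c1, c2], ∀ t, ∀ x ∈ closure D, 0 < f t x)
    (hper : ∀ f ∈ [a1, a2, b1, b2, c1, c2], ∀ t x, f (t + T) x = f t x)
    (τ : ℝ) (hτ : 0 < τ)
    (u1 v1 u2 v2 : ℝ → EuclideanSpace ℝ (Fin N) → ℝ)
    (hsub : IsSubSolN N D κ ν1 ν2 a1 a2 b1 b2 c1 c2 τ u1 v1)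
    (hsup : IsSuperSolN N D κ ν1 ν2 a1 a2 b1 b2 c1 c2 τ u2 v2)
    (hnn1 : ∀ t ∈ Set.Ico (0:ℝ) τ, ∀ x ∈ closure D, 0 ≤ u1 t x ∧ 0 ≤ v1 t x)
    (hnn2 : ∀ t ∈ Set.Ico (0:ℝ) τ, ∀ x ∈ closure D, 0 ≤ u2 t x ∧ 0 ≤ v2 t x)
    (hu0 : ∀ x ∈ closure D, u1 0 x ≤ u2 0 x)
    (hv0 : ∀ x ∈ closure D, v2 0 x ≤ v1 0 x) :
    ∀ t ∈ Set.Ioo (0:ℝ) τ, ∀ x ∈ closure D, u1 t x ≤ u2 t x ∧ v2 t x ≤ v1 t x := by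
  classical
  have hκnn : ∀ z, 0 ≤ κ z := by
    intro z
    rcases lt_or_ge ‖z‖ r with h | h
    · exact (hκpos z h).le
    · simp [hκsupp z h]
  have hκsupport : HasCompactSupport κ := by
    apply HasCompactSupport.intro (isCompact_closedBall (0 : EuclideanSpace ℝ (Fin N)) r)
    intro z hz
    apply hκsupp
    have h1 : ¬ dist z 0 ≤ r := hz
    rw [dist_zero_right] at h1
    linarith [not_le.mp h1]
  have hκInt : Integrable κ := hκc.integrable_of_hasCompactSupport hκsupport
  have hDcc : IsCompact (closure D) :=
    Metric.isCompact_of_isClosed_isBounded isClosed_closure hDbd.closure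
  obtain ⟨hu1c, hv1c, hdiff1, hineq1⟩ := hsub
  obtain ⟨hu2c, hv2c, hdiff2, hineq2⟩ := hsup
  intro t0 ht0 x0 hx0
  set K : Set (ℝ × EuclideanSpace ℝ (Fin N)) := Set.Icc 0 t0 ×ˢ closure D with hKdef
  have hKc : IsCompact K := isCompact_Icc.prod hDcc
  have hKsub : K ⊆ Set.Ico 0 τ ×ˢ closure D :=
    Set.prod_mono (fun s hs => ⟨hs.1, lt_of_le_of_lt hs.2 ht0.2⟩) le_rfl
  have hKuniv : K ⊆ (Set.univ : Set ℝ) ×ˢ closure D :=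
    Set.prod_mono (fun s _ => Set.mem_univ s) le_rfl
  have hKne : K.Nonempty := by
    obtain ⟨y, hy⟩ := hDne
    exact ⟨(0, y), ⟨⟨le_refl 0, ht0.1.le⟩, subset_closure hy⟩⟩
  set G : ℝ × EuclideanSpace ℝ (Fin N) → ℝ := fun p =>
    |u1 p.1 p.2| + |u2 p.1 p.2| + |v1 p.1 p.2| + |v2 p.1 p.2| +
    |a1 p.1 p.2| + |a2 p.1 p.2| + |b1 p.1 p.2| + |b2 p.1 p.2| + |c1 p.1 p.2| + |c2 p.1 p.2|
    with hGdef
  have hGc : ContinuousOn G K := by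
    refine ((((((((((hu1c.mono hKsub).abs.add (hu2c.mono hKsub).abs).add
      (hv1c.mono hKsub).abs).add (hv2c.mono hKsub).abs).add
      ((hc a1 (by simp)).mono hKuniv).abs).add ((hc a2 (by simp)).mono hKuniv).abs).add
      ((hc b1 (by simp)).mono hKuniv).abs).add ((hc b2 (by simp)).mono hKuniv).abs).add
      ((hc c1 (by simp)).mono hKuniv).abs).add ((hc c2 (by simp)).mono hKuniv).abs)
  obtain ⟨C, hCb⟩ := hKc.exists_bound_of_continuousOn hGc
  have hGle : ∀ p ∈ K, G p ≤ C := fun p hp =>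
    (le_abs_self _).trans (by simpa [Real.norm_eq_abs] using hCb p hp)
  have hC0 : 0 ≤ C := by
    obtain ⟨p, hp⟩ := hKne
    have h1 : 0 ≤ G p := by simp only [hGdef]; positivity
    linarith [hGle p hp]
  set lam : ℝ := C + C * C + 1 with hlam
  set F : ℝ × EuclideanSpace ℝ (Fin N) → ℝ := fun p =>
    Real.exp (-lam * p.1) * min (u2 p.1 p.2 - u1 p.1 p.2) (v1 p.1 p.2 - v2 p.1 p.2) with hFdef
  have hFc : ContinuousOn F K := by
    apply ContinuousOn.mul
    · exact (Real.continuous_exp.comp (continuous_const.mul continuous_fst)).continuousOn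
    · exact continuous_min.comp_continuousOn
        (((hu2c.mono hKsub).sub (hu1c.mono hKsub)).prodMk
          ((hv1c.mono hKsub).sub (hv2c.mono hKsub)))
  obtain ⟨q, hqK, hqmin⟩ := hKc.exists_isMinOn hKne hFc
  obtain ⟨t1, x1⟩ := q
  have hqmin' : ∀ p ∈ K, F (t1, x1) ≤ F p := fun p hp => isMinOn_iff.mp hqmin p hp
  have ht1m : t1 ∈ Set.Icc 0 t0 := hqK.1
  have hx1 : x1 ∈ closure D := hqK.2
  have hm0 : 0 ≤ F (t1, x1) := by
    by_contra hneg
    push_neg at hneg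
    simp only [hFdef] at hneg
    have hμneg : min (u2 t1 x1 - u1 t1 x1) (v1 t1 x1 - v2 t1 x1) < 0 := by
      by_contra h
      push_neg at h
      have := mul_nonneg (Real.exp_nonneg (-lam * t1)) h
      linarith
    have ht1pos : 0 < t1 := by
      rcases eq_or_lt_of_le ht1m.1 with h | h
      · exfalso
        subst h
        have h2 := le_min (sub_nonneg.2 (hu0 x1 hx1)) (sub_nonneg.2 (hv0 x1 hx1))
        linarith
      · exact h
    have ht1τ : t1 < τ := lt_of_le_of_lt ht1m.2 ht0.2
    have ht1Ico : t1 ∈ Set.Ico (0:ℝ) τ := ⟨ht1m.1, ht1τ⟩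
    have ht1Ioo : t1 ∈ Set.Ioo (0:ℝ) τ := ⟨ht1pos, ht1τ⟩
    have hsp : ∀ y ∈ closure D,
        min (u2 t1 x1 - u1 t1 x1) (v1 t1 x1 - v2 t1 x1) ≤ u2 t1 y - u1 t1 y ∧
        min (u2 t1 x1 - u1 t1 x1) (v1 t1 x1 - v2 t1 x1) ≤ v1 t1 y - v2 t1 y := by
      intro y hy
      have h1 := hqmin' (t1, y) ⟨ht1m, hy⟩
      simp only [hFdef] at h1
      have he := Real.exp_pos (-lam * t1)
      have h2 : min (u2 t1 x1 - u1 t1 x1) (v1 t1 x1 - v2 t1 x1) ≤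
          min (u2 t1 y - u1 t1 y) (v1 t1 y - v2 t1 y) :=
        le_of_mul_le_mul_left h1 he
      exact ⟨h2.trans (min_le_left _ _), h2.trans (min_le_right _ _)⟩
    have hIntOn : ∀ g : EuclideanSpace ℝ (Fin N) → ℝ, ContinuousOn g (closure D) →
        IntegrableOn (fun y => κ (y - x1) * (g y - g x1)) D := by
      intro g hg
      obtain ⟨Cg, hCg⟩ := hDcc.exists_bound_of_continuousOn hg
      have hκx : IntegrableOn (fun y => κ (y - x1)) D := (hκInt.comp_sub_right x1).integrableOn
      refine Integrable.mono' (hκx.const_mul (2*Cg)) ?_ ?_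
      · exact (((hκc.comp (continuous_id.sub continuous_const)).continuousOn).mul
          ((hg.mono subset_closure).sub continuousOn_const)).aestronglyMeasurable
          hDo.measurableSet
      · refine ae_restrict_of_forall_mem hDo.measurableSet (fun y hy => ?_)
        have h1 : ‖g y‖ ≤ Cg := hCg y (subset_closure hy)
        have h2 : ‖g x1‖ ≤ Cg := hCg x1 hx1
        rw [Real.norm_eq_abs] at h1 h2 ⊢
        rw [abs_mul, abs_of_nonneg (hκnn _)]
        have h3 : |g y - g x1| ≤ 2*Cg := by
          have := abs_sub (g y) (g x1); linarith
        calc κ (y - x1) * |g y - g x1| ≤ κ (y - x1) * (2*Cg) :=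
              mul_le_mul_of_nonneg_left h3 (hκnn _)
          _ = 2*Cg * κ (y - x1) := by ring
    have hslice : ∀ w : ℝ → EuclideanSpace ℝ (Fin N) → ℝ,
        ContinuousOn (fun p : ℝ × EuclideanSpace ℝ (Fin N) => w p.1 p.2)
          (Set.Ico 0 τ ×ˢ closure D) →
        ContinuousOn (fun y => w t1 y) (closure D) := by
      intro w hw
      have h1 := hw.comp ((continuous_const.prodMk continuous_id).continuousOn
        (s := closure D)) (fun y hy => ⟨ht1Ico, hy⟩)
      exact h1
    have hIco_nhds : Set.Ico (0:ℝ) τ ∈ 𝓝 t1 :=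
      Filter.mem_of_superset (isOpen_Ioo.mem_nhds ht1Ioo) Set.Ioo_subset_Ico_self
    have hGq := hGle (t1, x1) ⟨ht1m, hx1⟩
    simp only [hGdef] at hGq
    have hab_u1 := abs_nonneg (u1 t1 x1); have hab_u2 := abs_nonneg (u2 t1 x1)
    have hab_v1 := abs_nonneg (v1 t1 x1); have hab_v2 := abs_nonneg (v2 t1 x1)
    have hab_a1 := abs_nonneg (a1 t1 x1); have hab_a2 := abs_nonneg (a2 t1 x1)
    have hab_b1 := abs_nonneg (b1 t1 x1); have hab_b2 := abs_nonneg (b2 t1 x1)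
    have hab_c1 := abs_nonneg (c1 t1 x1); have hab_c2 := abs_nonneg (c2 t1 x1)
    have hle_u1 := le_abs_self (u1 t1 x1); have hle_u2 := le_abs_self (u2 t1 x1)
    have hle_v1 := le_abs_self (v1 t1 x1); have hle_v2 := le_abs_self (v2 t1 x1)
    have hle_a1 := le_abs_self (a1 t1 x1); have hle_a2 := le_abs_self (a2 t1 x1)
    have hle_b1 := le_abs_self (b1 t1 x1); have hle_b2 := le_abs_self (b2 t1 x1)
    have hle_c1 := le_abs_self (c1 t1 x1); have hle_c2 := le_abs_self (c2 t1 x1)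
    have hu1nn := (hnn1 t1 ht1Ico x1 hx1).1
    have hv1nn := (hnn1 t1 ht1Ico x1 hx1).2
    have hu2nn := (hnn2 t1 ht1Ico x1 hx1).1
    have hv2nn := (hnn2 t1 ht1Ico x1 hx1).2
    have hb1p := hpos b1 (by simp) t1 x1 hx1
    have hb2p := hpos b2 (by simp) t1 x1 hx1
    have hc1p := hpos c1 (by simp) t1 x1 hx1
    have hc2p := hpos c2 (by simp) t1 x1 hx1
    have hd1u := ((hdiff1 x1 hx1 t1 ht1Ico).1).differentiableAt hIco_nhds
    have hd1v := ((hdiff1 x1 hx1 t1 ht1Ico).2).differentiableAt hIco_nhds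
    have hd2u := ((hdiff2 x1 hx1 t1 ht1Ico).1).differentiableAt hIco_nhds
    have hd2v := ((hdiff2 x1 hx1 t1 ht1Ico).2).differentiableAt hIco_nhds
    have hP1u := (hineq1 t1 ht1Ioo x1 hx1).1
    have hP1v := (hineq1 t1 ht1Ioo x1 hx1).2
    have hP2u := (hineq2 t1 ht1Ioo x1 hx1).1
    have hP2v := (hineq2 t1 ht1Ioo x1 hx1).2
    rw [derivWithin_of_mem_nhds hIco_nhds] at hP1u hP1v hP2u hP2v
    have he1 : HasDerivAt (fun s : ℝ => Real.exp (-lam * s)) (Real.exp (-lam * t1) * -lam) t1 := by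
      simpa using (((hasDerivAt_id t1).const_mul (-lam)).exp)
    have hexp_pos := Real.exp_pos (-lam * t1)
    rcases min_cases (u2 t1 x1 - u1 t1 x1) (v1 t1 x1 - v2 t1 x1) with ⟨hmeq, hcle⟩ | ⟨hmeq, hclt⟩
    · -- minimum is attained by u2 - u1
      rw [hmeq] at hμneg
      have hI : 0 ≤ (∫ y in D, κ (y - x1) * (u2 t1 y - u2 t1 x1)) -
          (∫ y in D, κ (y - x1) * (u1 t1 y - u1 t1 x1)) := by
        rw [← MeasureTheory.integral_sub (hIntOn _ (hslice u2 hu2c)) (hIntOn _ (hslice u1 hu1c))]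
        refine setIntegral_nonneg hDo.measurableSet (fun y hy => ?_)
        have h1 := (hsp y (subset_closure hy)).1
        rw [hmeq] at h1
        have h4 := mul_nonneg (hκnn (y - x1)) (sub_nonneg.2 h1)
        have h5 : κ (y - x1) * ((u2 t1 y - u1 t1 y) - (u2 t1 x1 - u1 t1 x1)) =
            κ (y - x1) * (u2 t1 y - u2 t1 x1) - κ (y - x1) * (u1 t1 y - u1 t1 x1) := by ring
        linarith [h4, h5]
      -- time-derivative bound at the minimum point
      have hgmin : ∀ s ∈ Set.Icc (0:ℝ) t1,
          (fun s : ℝ => Real.exp (-lam * s) * (u2 s x1 - u1 s x1)) t1 ≤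
          (fun s : ℝ => Real.exp (-lam * s) * (u2 s x1 - u1 s x1)) s := by
        intro s hs
        have h1 := hqmin' (s, x1) ⟨⟨hs.1, hs.2.trans ht1m.2⟩, hx1⟩
        simp only [hFdef] at h1
        rw [hmeq] at h1
        have h2 : Real.exp (-lam * s) * min (u2 s x1 - u1 s x1) (v1 s x1 - v2 s x1) ≤
            Real.exp (-lam * s) * (u2 s x1 - u1 s x1) :=
          mul_le_mul_of_nonneg_left (min_le_left _ _) (Real.exp_nonneg _)
        simpa using h1.trans h2
      have hgd : HasDerivAt (fun s : ℝ => Real.exp (-lam * s) * (u2 s x1 - u1 s x1))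
          (Real.exp (-lam * t1) * -lam * (u2 t1 x1 - u1 t1 x1) +
            Real.exp (-lam * t1) *
              (deriv (fun s => u2 s x1) t1 - deriv (fun s => u1 s x1) t1)) t1 :=
        he1.mul (hd2u.hasDerivAt.sub hd1u.hasDerivAt)
      have hder := deriv_nonpos_of_min_left ht1pos hgd hgmin
      have hDw : deriv (fun s => u2 s x1) t1 - deriv (fun s => u1 s x1) t1 ≤
          lam * (u2 t1 x1 - u1 t1 x1) := by
        by_contra hcon
        push_neg at hcon
        have h2 : 0 < Real.exp (-lam * t1) *
            ((deriv (fun s => u2 s x1) t1 - deriv (fun s => u1 s x1) t1) -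
              lam * (u2 t1 x1 - u1 t1 x1)) :=
          mul_pos hexp_pos (by linarith)
        have h3 : Real.exp (-lam * t1) *
            ((deriv (fun s => u2 s x1) t1 - deriv (fun s => u1 s x1) t1) -
              lam * (u2 t1 x1 - u1 t1 x1)) =
            Real.exp (-lam * t1) * -lam * (u2 t1 x1 - u1 t1 x1) +
            Real.exp (-lam * t1) *
              (deriv (fun s => u2 s x1) t1 - deriv (fun s => u1 s x1) t1) := by ring
        linarith [hder]
      -- the reaction terms
      have hEexp : u2 t1 x1 * (a1 t1 x1 - b1 t1 x1 * u2 t1 x1 - c1 t1 x1 * v2 t1 x1) -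
          u1 t1 x1 * (a1 t1 x1 - b1 t1 x1 * u1 t1 x1 - c1 t1 x1 * v1 t1 x1) =
          (a1 t1 x1 - b1 t1 x1 * (u1 t1 x1 + u2 t1 x1) - c1 t1 x1 * v2 t1 x1) *
            (u2 t1 x1 - u1 t1 x1) +
          c1 t1 x1 * u1 t1 x1 * (v1 t1 x1 - v2 t1 x1) := by ring
      have hcoefle : a1 t1 x1 - b1 t1 x1 * (u1 t1 x1 + u2 t1 x1) - c1 t1 x1 * v2 t1 x1 ≤ C := by
        linarith [mul_nonneg hb1p.le (add_nonneg hu1nn hu2nn), mul_nonneg hc1p.le hv2nn]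
      have hcoefW : C * (u2 t1 x1 - u1 t1 x1) ≤
          (a1 t1 x1 - b1 t1 x1 * (u1 t1 x1 + u2 t1 x1) - c1 t1 x1 * v2 t1 x1) *
            (u2 t1 x1 - u1 t1 x1) :=
        mul_le_mul_of_nonpos_right hcoefle hμneg.le
      have hc1u1le : c1 t1 x1 * u1 t1 x1 ≤ C * C :=
        mul_le_mul (le_trans hle_c1 (by linarith)) (le_trans hle_u1 (by linarith)) hu1nn hC0
      have hc1u1nn : 0 ≤ c1 t1 x1 * u1 t1 x1 := mul_nonneg hc1p.le hu1nn
      have hstep1 : c1 t1 x1 * u1 t1 x1 * (u2 t1 x1 - u1 t1 x1) ≤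
          c1 t1 x1 * u1 t1 x1 * (v1 t1 x1 - v2 t1 x1) :=
        mul_le_mul_of_nonneg_left hcle hc1u1nn
      have hstep2 : (C * C) * (u2 t1 x1 - u1 t1 x1) ≤
          c1 t1 x1 * u1 t1 x1 * (u2 t1 x1 - u1 t1 x1) :=
        mul_le_mul_of_nonpos_right hc1u1le hμneg.le
      have hring : ν1 * ((∫ y in D, κ (y - x1) * (u2 t1 y - u2 t1 x1)) -
          (∫ y in D, κ (y - x1) * (u1 t1 y - u1 t1 x1))) =
          ν1 * (∫ y in D, κ (y - x1) * (u2 t1 y - u2 t1 x1)) -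
          ν1 * (∫ y in D, κ (y - x1) * (u1 t1 y - u1 t1 x1)) := by ring
      have hνI : 0 ≤ ν1 * ((∫ y in D, κ (y - x1) * (u2 t1 y - u2 t1 x1)) -
          (∫ y in D, κ (y - x1) * (u1 t1 y - u1 t1 x1))) := mul_nonneg hν1.le hI
      have hlamW : lam * (u2 t1 x1 - u1 t1 x1) = C * (u2 t1 x1 - u1 t1 x1) +
          (C * C) * (u2 t1 x1 - u1 t1 x1) + (u2 t1 x1 - u1 t1 x1) := by
        rw [hlam]; ring
      linarith
    · -- minimum is attained by v1 - v2
      rw [hmeq] at hμneg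
      have hI : 0 ≤ (∫ y in D, κ (y - x1) * (v1 t1 y - v1 t1 x1)) -
          (∫ y in D, κ (y - x1) * (v2 t1 y - v2 t1 x1)) := by
        rw [← MeasureTheory.integral_sub (hIntOn _ (hslice v1 hv1c)) (hIntOn _ (hslice v2 hv2c))]
        refine setIntegral_nonneg hDo.measurableSet (fun y hy => ?_)
        have h1 := (hsp y (subset_closure hy)).2
        rw [hmeq] at h1
        have h4 := mul_nonneg (hκnn (y - x1)) (sub_nonneg.2 h1)
        have h5 : κ (y - x1) * ((v1 t1 y - v2 t1 y) - (v1 t1 x1 - v2 t1 x1)) =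
            κ (y - x1) * (v1 t1 y - v1 t1 x1) - κ (y - x1) * (v2 t1 y - v2 t1 x1) := by ring
        linarith [h4, h5]
      have hgmin : ∀ s ∈ Set.Icc (0:ℝ) t1,
          (fun s : ℝ => Real.exp (-lam * s) * (v1 s x1 - v2 s x1)) t1 ≤
          (fun s : ℝ => Real.exp (-lam * s) * (v1 s x1 - v2 s x1)) s := by
        intro s hs
        have h1 := hqmin' (s, x1) ⟨⟨hs.1, hs.2.trans ht1m.2⟩, hx1⟩
        simp only [hFdef] at h1
        rw [hmeq] at h1
        have h2 : Real.exp (-lam * s) * min (u2 s x1 - u1 s x1) (v1 s x1 - v2 s x1) ≤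
            Real.exp (-lam * s) * (v1 s x1 - v2 s x1) :=
          mul_le_mul_of_nonneg_left (min_le_right _ _) (Real.exp_nonneg _)
        simpa using h1.trans h2
      have hgd : HasDerivAt (fun s : ℝ => Real.exp (-lam * s) * (v1 s x1 - v2 s x1))
          (Real.exp (-lam * t1) * -lam * (v1 t1 x1 - v2 t1 x1) +
            Real.exp (-lam * t1) *
              (deriv (fun s => v1 s x1) t1 - deriv (fun s => v2 s x1) t1)) t1 :=
        he1.mul (hd1v.hasDerivAt.sub hd2v.hasDerivAt)
      have hder := deriv_nonpos_of_min_left ht1pos hgd hgmin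
      have hDw : deriv (fun s => v1 s x1) t1 - deriv (fun s => v2 s x1) t1 ≤
          lam * (v1 t1 x1 - v2 t1 x1) := by
        by_contra hcon
        push_neg at hcon
        have h2 : 0 < Real.exp (-lam * t1) *
            ((deriv (fun s => v1 s x1) t1 - deriv (fun s => v2 s x1) t1) -
              lam * (v1 t1 x1 - v2 t1 x1)) :=
          mul_pos hexp_pos (by linarith)
        have h3 : Real.exp (-lam * t1) *
            ((deriv (fun s => v1 s x1) t1 - deriv (fun s => v2 s x1) t1) -
              lam * (v1 t1 x1 - v2 t1 x1)) =
            Real.exp (-lam * t1) * -lam * (v1 t1 x1 - v2 t1 x1) +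
            Real.exp (-lam * t1) *
              (deriv (fun s => v1 s x1) t1 - deriv (fun s => v2 s x1) t1) := by ring
        linarith [hder]
      have hEexp : v1 t1 x1 * (a2 t1 x1 - b2 t1 x1 * u1 t1 x1 - c2 t1 x1 * v1 t1 x1) -
          v2 t1 x1 * (a2 t1 x1 - b2 t1 x1 * u2 t1 x1 - c2 t1 x1 * v2 t1 x1) =
          (a2 t1 x1 - b2 t1 x1 * u1 t1 x1 - c2 t1 x1 * (v1 t1 x1 + v2 t1 x1)) *
            (v1 t1 x1 - v2 t1 x1) +
          b2 t1 x1 * v2 t1 x1 * (u2 t1 x1 - u1 t1 x1) := by ring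
      have hcoefle : a2 t1 x1 - b2 t1 x1 * u1 t1 x1 - c2 t1 x1 * (v1 t1 x1 + v2 t1 x1) ≤ C := by
        linarith [mul_nonneg hb2p.le hu1nn, mul_nonneg hc2p.le (add_nonneg hv1nn hv2nn)]
      have hcoefW : C * (v1 t1 x1 - v2 t1 x1) ≤
          (a2 t1 x1 - b2 t1 x1 * u1 t1 x1 - c2 t1 x1 * (v1 t1 x1 + v2 t1 x1)) *
            (v1 t1 x1 - v2 t1 x1) :=
        mul_le_mul_of_nonpos_right hcoefle hμneg.le
      have hb2v2le : b2 t1 x1 * v2 t1 x1 ≤ C * C :=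
        mul_le_mul (le_trans hle_b2 (by linarith)) (le_trans hle_v2 (by linarith)) hv2nn hC0
      have hb2v2nn : 0 ≤ b2 t1 x1 * v2 t1 x1 := mul_nonneg hb2p.le hv2nn
      have hstep1 : b2 t1 x1 * v2 t1 x1 * (v1 t1 x1 - v2 t1 x1) ≤
          b2 t1 x1 * v2 t1 x1 * (u2 t1 x1 - u1 t1 x1) :=
        mul_le_mul_of_nonneg_left hclt.le hb2v2nn
      have hstep2 : (C * C) * (v1 t1 x1 - v2 t1 x1) ≤
          b2 t1 x1 * v2 t1 x1 * (v1 t1 x1 - v2 t1 x1) :=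
        mul_le_mul_of_nonpos_right hb2v2le hμneg.le
      have hring : ν2 * ((∫ y in D, κ (y - x1) * (v1 t1 y - v1 t1 x1)) -
          (∫ y in D, κ (y - x1) * (v2 t1 y - v2 t1 x1))) =
          ν2 * (∫ y in D, κ (y - x1) * (v1 t1 y - v1 t1 x1)) -
          ν2 * (∫ y in D, κ (y - x1) * (v2 t1 y - v2 t1 x1)) := by ring
      have hνI : 0 ≤ ν2 * ((∫ y in D, κ (y - x1) * (v1 t1 y - v1 t1 x1)) -
          (∫ y in D, κ (y - x1) * (v2 t1 y - v2 t1 x1))) := mul_nonneg hν2.le hI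
      have hlamW : lam * (v1 t1 x1 - v2 t1 x1) = C * (v1 t1 x1 - v2 t1 x1) +
          (C * C) * (v1 t1 x1 - v2 t1 x1) + (v1 t1 x1 - v2 t1 x1) := by
        rw [hlam]; ring
      linarith
  -- conclude from nonnegativity of the minimum
  have hfin := hqmin' (t0, x0) ⟨⟨ht0.1.le, le_refl t0⟩, hx0⟩
  have h0 : 0 ≤ F (t0, x0) := le_trans hm0 hfin
  simp only [hFdef] at h0
  have hexp := Real.exp_pos (-lam * t0)
  have hmin0 : 0 ≤ min (u2 t0 x0 - u1 t0 x0) (v1 t0 x0 - v2 t0 x0) := by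
    by_contra hn
    push_neg at hn
    have := mul_neg_of_pos_of_neg hexp hn
    linarith
  constructor
  · have := hmin0.trans (min_le_left _ _); linarith
  · have := hmin0.trans (min_le_right _ _); linarith
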